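/- Let A be a row circular binary matrix satisfying the standard assumptions, and let v, v' be distinct vertices of Q*(A). Then every node of the joint saturation graph G(v,v') has degree at most 2, and hence every connected component of G(v,v') is either a path (possibly an isolated node) or a cycle. -/

import Mathlib

open Finset

/-- Support of a vector. -/
def supp {n : ℕ} (x : Fin n → ℝ) : Set (Fin n) := {j | x j ≠ 0}

/-- Support of the `t`-th row of a matrix. -/
def rowSupp {m n : ℕ} (A : Matrix (Fin m) (Fin n) ℝ) (t : Fin m) : Set (Fin n) :=
  {j | A t j ≠ 0}

def IsBinaryMatrix {m n : ℕ} (A : Matrix (Fin m) (Fin n) ℝ) : Prop :=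
  ∀ t j, A t j = 0 ∨ A t j = 1

def IsBinaryVec {n : ℕ} (x : Fin n → ℝ) : Prop := ∀ j, x j = 0 ∨ x j = 1

/-- The polyhedron `{x | A x ≥ b, x ≥ 0}`. -/
def polyP {m n : ℕ} (A : Matrix (Fin m) (Fin n) ℝ) (b : Fin m → ℝ) : Set (Fin n → ℝ) :=
  {x | (∀ i, b i ≤ ∑ j, A i j * x j) ∧ ∀ j, 0 ≤ x j}

/-- The linear relaxation `Q(A) = {x | A x ≥ 1, x ≥ 0}`. -/
def polyQ {m n : ℕ} (A : Matrix (Fin m) (Fin n) ℝ) : Set (Fin n → ℝ) :=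
  {x | (∀ i, 1 ≤ ∑ j, A i j * x j) ∧ ∀ j, 0 ≤ x j}

/-- The set covering polyhedron `Q*(A)`: convex hull of nonnegative integer solutions of
`A x ≥ 1`. -/
def Qstar {m n : ℕ} (A : Matrix (Fin m) (Fin n) ℝ) : Set (Fin n → ℝ) :=
  convexHull ℝ {x | (∀ j, ∃ k : ℕ, x j = k) ∧ ∀ i, 1 ≤ ∑ j, A i j * x j}

/-- A vertex of a convex set is an extreme point. -/
def IsVertex {n : ℕ} (S : Set (Fin n → ℝ)) (v : Fin n → ℝ) : Prop :=
  v ∈ S.extremePoints ℝ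

/-- Two distinct vertices are adjacent when they lie on a common edge, i.e. the segment
joining them is a face (extreme subset) of `S`. -/
def AdjacentVerts {n : ℕ} (S : Set (Fin n → ℝ)) (v w : Fin n → ℝ) : Prop :=
  v ≠ w ∧ IsVertex S v ∧ IsVertex S w ∧ IsExtreme ℝ S (segment ℝ v w)

/-- There is a row support `C` with `C ∩ supp v = {p}` and `C ∩ supp v' = {p'}`. -/
def jsgEdge {m n : ℕ} (A : Matrix (Fin m) (Fin n) ℝ) (v v' : Fin n → ℝ)
    (p p' : Fin n) : Prop :=
  ∃ t, rowSupp A t ∩ supp v = {p} ∧ rowSupp A t ∩ supp v' = {p'}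

/-- The joint saturation graph of `v` and `v'` with respect to `A`. -/
def JSG {m n : ℕ} (A : Matrix (Fin m) (Fin n) ℝ) (v v' : Fin n → ℝ) :
    SimpleGraph (Fin n) where
  Adj p p' := p ≠ p' ∧ (jsgEdge A v v' p p' ∨ jsgEdge A v v' p' p)
  symm := by constructor; intro p p' h; exact ⟨h.1.symm, h.2.symm⟩
  loopless := by constructor; intro p h; exact h.1 rfl

/-- The node set of the joint saturation graph: the symmetric difference of the supports. -/
def jsgNodes {n : ℕ} (v v' : Fin n → ℝ) : Set (Fin n) :=
  (supp v \ supp v') ∪ (supp v' \ supp v)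

def JSGConnected {m n : ℕ} (A : Matrix (Fin m) (Fin n) ℝ) (v v' : Fin n → ℝ) : Prop :=
  ∀ p ∈ jsgNodes v v', ∀ q ∈ jsgNodes v v', (JSG A v v').Reachable p q

/-- One of the two partite sets is contained in a single connected component. -/
def JSGPartiteConnected {m n : ℕ} (A : Matrix (Fin m) (Fin n) ℝ) (v v' : Fin n → ℝ) : Prop :=
  (∀ p ∈ supp v \ supp v', ∀ q ∈ supp v \ supp v', (JSG A v v').Reachable p q) ∨
  (∀ p ∈ supp v' \ supp v, ∀ q ∈ supp v' \ supp v, (JSG A v v').Reachable p q)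

/-- Exactly two components, one of which is an isolated node. -/
def JSGAlmostConnected {m n : ℕ} (A : Matrix (Fin m) (Fin n) ℝ) (v v' : Fin n → ℝ) : Prop :=
  ∃ q ∈ jsgNodes v v', (∀ p, ¬ (JSG A v v').Adj q p) ∧ (jsgNodes v v' \ {q}).Nonempty ∧
    ∀ p ∈ jsgNodes v v' \ {q}, ∀ r ∈ jsgNodes v v' \ {q}, (JSG A v v').Reachable p r

open Fin.NatCast in
/-- The (directed) circular arc from `i` to `j` in `Fin n`. -/
def arc {n : ℕ} [NeZero n] (i j : Fin n) : Set (Fin n) :=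
  {k | ∃ h : ℕ, h ≤ ((j - i : Fin n) : ℕ) ∧ k = i + (h : Fin n)}

/-- A matrix is row circular if each row support is a circular arc. -/
def RowCircular {m n : ℕ} [NeZero n] (A : Matrix (Fin m) (Fin n) ℝ) : Prop :=
  ∀ t, ∃ i j : Fin n, rowSupp A t = arc i j

/-- The standard assumptions: binary, no dominating rows, between 2 and n-1 ones per row,
no all-zero or all-one column. -/
def StandardAssumptions {m n : ℕ} (A : Matrix (Fin m) (Fin n) ℝ) : Prop :=
  IsBinaryMatrix A ∧
  (∀ s t : Fin m, s ≠ t → ¬ rowSupp A s ⊆ rowSupp A t) ∧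
  (∀ t, 2 ≤ (rowSupp A t).ncard ∧ (rowSupp A t).ncard ≤ n - 1) ∧
  (∀ j : Fin n, (∃ t, A t j ≠ 0) ∧ (∃ t, A t j = 0))

/-- `a` and `b` occur consecutively (in either order) in the list `l`. -/
def ListConsec {α : Type*} (l : List α) (a b : α) : Prop :=
  ∃ k : ℕ, (l[k]? = some a ∧ l[k+1]? = some b) ∨ (l[k]? = some b ∧ l[k+1]? = some a)

/-- `a` and `b` occur cyclically consecutively (in either order) in the list `l`. -/
def CycConsec {α : Type*} (l : List α) (a b : α) : Prop :=
  ∃ k : ℕ, k < l.length ∧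
    ((l[k]? = some a ∧ l[(k+1) % l.length]? = some b) ∨
     (l[k]? = some b ∧ l[(k+1) % l.length]? = some a))

/-- The set `S` induces a path (possibly a single node) in `G`. -/
def IsPathOn {n : ℕ} (G : SimpleGraph (Fin n)) (S : Set (Fin n)) : Prop :=
  ∃ l : List (Fin n), l.Nodup ∧ (∀ x, x ∈ S ↔ x ∈ l) ∧
    (∀ a b, a ∈ S → G.Adj a b → ListConsec l a b) ∧
    (∀ a b, ListConsec l a b → G.Adj a b)

/-- The set `S` induces a cycle in `G`. -/
def IsCycleOn {n : ℕ} (G : SimpleGraph (Fin n)) (S : Set (Fin n)) : Prop :=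
  ∃ l : List (Fin n), 3 ≤ l.length ∧ l.Nodup ∧ (∀ x, x ∈ S ↔ x ∈ l) ∧
    (∀ a b, a ∈ S → G.Adj a b → CycConsec l a b) ∧
    (∀ a b, CycConsec l a b → G.Adj a b)

/-- `p` and `q` are cyclically consecutive elements of `S`. -/
def CyclConsecIn {n : ℕ} [NeZero n] (S : Set (Fin n)) (p q : Fin n) : Prop :=
  p ≠ q ∧ p ∈ S ∧ q ∈ S ∧ (arc p q ∩ S = {p, q} ∨ arc q p ∩ S = {p, q})

/-- The circulant matrix `C(n,2)` with row supports `{t, t+1}` (mod n). -/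
def Cn2 (n : ℕ) [NeZero n] : Matrix (Fin n) (Fin n) ℝ :=
  fun t j => if j = t ∨ j = t + 1 then 1 else 0

/-- Append a row to a matrix. -/
def appendRow {m n : ℕ} (A : Matrix (Fin m) (Fin n) ℝ) (a : Fin n → ℝ) :
    Matrix (Fin (m+1)) (Fin n) ℝ :=
  fun t j => if h : (t : ℕ) < m then A ⟨t, h⟩ j else a j

/-- A set of points is integral if all its extreme points are integer vectors. -/
def IsIntegralSet {n : ℕ} (S : Set (Fin n → ℝ)) : Prop :=
  ∀ x ∈ S.extremePoints ℝ, ∀ j, ∃ z : ℤ, x j = z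

/-- A binary matrix is minimally nonideal if `Q(A)` is not integral but both restrictions
`Q(A) ∩ {x_i = 0}` and `Q(A) ∩ {x_i = 1}` are integral for every coordinate `i`. -/
def MinimallyNonideal {m n : ℕ} (A : Matrix (Fin m) (Fin n) ℝ) : Prop :=
  ¬ IsIntegralSet (polyQ A) ∧
  ∀ i : Fin n, IsIntegralSet (polyQ A ∩ {x | x i = 0}) ∧
               IsIntegralSet (polyQ A ∩ {x | x i = 1})

/-- The matrix of the degenerate projective plane with `t+1` points and lines. -/
def Jmat (t : ℕ) : Matrix (Fin (t+1)) (Fin (t+1)) ℝ :=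
  fun i j => if i = 0 then (if j = 0 then 0 else 1) else (if j = 0 ∨ j = i then 1 else 0)

/-- `A` is isomorphic to some degenerate projective plane matrix `J_t`, `t ≥ 2`. -/
def IsoToDegenProjPlane {m n : ℕ} (A : Matrix (Fin m) (Fin n) ℝ) : Prop :=
  ∃ t : ℕ, 2 ≤ t ∧ ∃ (σ : Fin m ≃ Fin (t+1)) (τ : Fin n ≃ Fin (t+1)),
    ∀ i j, A i j = Jmat t (σ i) (τ j)

/-- `A₁` is the core of `A`: a square nonsingular row submatrix with `r` ones per row and
per column, all other rows of `A` having more than `r` ones. -/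
def IsCore {m n : ℕ} (A : Matrix (Fin m) (Fin n) ℝ) (A₁ : Matrix (Fin n) (Fin n) ℝ)
    (r : ℕ) : Prop :=
  2 ≤ r ∧ A₁.det ≠ 0 ∧
  (∃ f : Fin n → Fin m, Function.Injective f ∧ (∀ i, A₁ i = A (f i)) ∧
    ∀ t, t ∉ Set.range f → r < (rowSupp A t).ncard) ∧
  (∀ i, (rowSupp A₁ i).ncard = r) ∧ (∀ j, {i | A₁ i j ≠ 0}.ncard = r)

/-- `B₁` is the core of the blocker of `A`: a square nonsingular matrix whose rows are
binary vertices of `Q*(A)` with `s` ones per row and per column, all other binary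
vertices of `Q*(A)` having more than `s` ones. -/
def IsBlockerCore {m n : ℕ} (A : Matrix (Fin m) (Fin n) ℝ) (B₁ : Matrix (Fin n) (Fin n) ℝ)
    (s : ℕ) : Prop :=
  2 ≤ s ∧ B₁.det ≠ 0 ∧
  (∀ i, IsBinaryVec (B₁ i) ∧ IsVertex (Qstar A) (B₁ i)) ∧
  Function.Injective (fun i => B₁ i) ∧
  (∀ i, (rowSupp B₁ i).ncard = s) ∧ (∀ j, {i | B₁ i j ≠ 0}.ncard = s) ∧
  (∀ x, IsBinaryVec x → IsVertex (Qstar A) x → (∀ i, x ≠ B₁ i) → s < (supp x).ncard)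

/-- `w^i` for `n = 3ν`: the complement of the characteristic vector of the residue class
`i` mod 3. -/
def wVec (n : ℕ) (i : Fin 3) : Fin n → ℝ :=
  fun k => if (k : ℕ) % 3 = (i : ℕ) then 0 else 1

/-- `a^i` for `n = 3ν`: the characteristic vector of the residue class `i` mod 3
(`a¹ = (1,0,0,1,0,0,…)` corresponds to `i = 0`). -/
def aVec (n : ℕ) (i : ℕ) : Fin n → ℝ :=
  fun k => if (k : ℕ) % 3 = i then 1 else 0

/-! ### Auxiliary development for Statement 6 -/

section DegreeBound

variable {n : ℕ} [NeZero n]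

open Fin.NatCast
open Fin.CommRing

/-- `q` is reached from `p` going "forward" with no element of `T` strictly in between. -/
def GoesP (T : Set (Fin n)) (p q : Fin n) : Prop :=
  ∀ h' : ℕ, 0 < h' → h' < ((q - p : Fin n) : ℕ) → p + (h' : Fin n) ∉ T

/-- `q` is reached from `p` going "backward" with no element of `T` strictly in between. -/
def GoesM (T : Set (Fin n)) (p q : Fin n) : Prop :=
  ∀ h' : ℕ, 0 < h' → h' < ((p - q : Fin n) : ℕ) → p - (h' : Fin n) ∉ T

lemma fin_cast_sub_of_le {a b : ℕ} (hab : a ≤ b) :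
    (b : Fin n) - (a : Fin n) = ((b - a : ℕ) : Fin n) := by
  have h : (b : Fin n) = (a : Fin n) + ((b - a : ℕ) : Fin n) := by
    rw [← Nat.cast_add, Nat.add_sub_cancel' hab]
  rw [h]; ring

lemma goes_arc {i j p q : Fin n} (hp : p ∈ arc i j) (hq : q ∈ arc i j) :
    (∀ h' : ℕ, 0 < h' → h' < ((q - p : Fin n) : ℕ) →
        p + (h' : Fin n) ∈ arc i j ∧ p + (h' : Fin n) ≠ q) ∨
    (∀ h' : ℕ, 0 < h' → h' < ((p - q : Fin n) : ℕ) →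
        p - (h' : Fin n) ∈ arc i j ∧ p - (h' : Fin n) ≠ q) := by
  obtain ⟨a, ha, rfl⟩ := hp
  obtain ⟨b, hb, rfl⟩ := hq
  have hD : ((j - i : Fin n) : ℕ) < n := Fin.is_lt _
  rcases le_total a b with hab | hba
  · left
    intro h' h0 hlt
    have hsub : (i + (b : Fin n)) - (i + (a : Fin n)) = ((b - a : ℕ) : Fin n) := by
      rw [add_sub_add_left_eq_sub, fin_cast_sub_of_le hab]
    rw [hsub, Fin.val_cast_of_lt (by omega)] at hlt
    have hrw : (i + (a : Fin n)) + (h' : Fin n) = i + ((a + h' : ℕ) : Fin n) := by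
      rw [Nat.cast_add]; ring
    constructor
    · rw [hrw]; exact ⟨a + h', by omega, rfl⟩
    · rw [hrw]
      intro hcontra
      have := add_left_cancel hcontra
      have hv := congrArg Fin.val this
      rw [Fin.val_cast_of_lt (by omega), Fin.val_cast_of_lt (by omega)] at hv
      omega
  · right
    intro h' h0 hlt
    have hsub : (i + (a : Fin n)) - (i + (b : Fin n)) = ((a - b : ℕ) : Fin n) := by
      rw [add_sub_add_left_eq_sub, fin_cast_sub_of_le hba]
    rw [hsub, Fin.val_cast_of_lt (by omega)] at hlt
    have hrw : (i + (a : Fin n)) - (h' : Fin n) = i + ((a - h' : ℕ) : Fin n) := by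
      rw [add_sub_assoc, fin_cast_sub_of_le (by omega : h' ≤ a)]
    constructor
    · rw [hrw]; exact ⟨a - h', by omega, rfl⟩
    · rw [hrw]
      intro hcontra
      have := add_left_cancel hcontra
      have hv := congrArg Fin.val this
      rw [Fin.val_cast_of_lt (by omega), Fin.val_cast_of_lt (by omega)] at hv
      omega

lemma jsgEdge_struct {m : ℕ} (A : Matrix (Fin m) (Fin n) ℝ) (hcirc : RowCircular A)
    {v v' : Fin n → ℝ} {p q : Fin n} (h : jsgEdge A v v' p q) (hpq : p ≠ q) :
    p ∉ supp v' ∧ q ∈ supp v' ∧ (GoesP (supp v') p q ∨ GoesM (supp v') p q) := by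
  obtain ⟨t, h1, h2⟩ := h
  obtain ⟨i, j, hij⟩ := hcirc t
  have hpm : p ∈ rowSupp A t ∩ supp v := by rw [h1]; rfl
  have hqm : q ∈ rowSupp A t ∩ supp v' := by rw [h2]; rfl
  have hpv' : p ∉ supp v' := by
    intro hc
    have : p ∈ rowSupp A t ∩ supp v' := ⟨hpm.1, hc⟩
    rw [h2] at this
    exact hpq this
  refine ⟨hpv', hqm.2, ?_⟩
  have hpa : p ∈ arc i j := hij ▸ hpm.1
  have hqa : q ∈ arc i j := hij ▸ hqm.1
  rcases goes_arc hpa hqa with hg | hg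
  · left
    intro h' h0 hlt hmem
    obtain ⟨hin, hne⟩ := hg h' h0 hlt
    have : p + (h' : Fin n) ∈ rowSupp A t ∩ supp v' := ⟨hij ▸ hin, hmem⟩
    rw [h2] at this
    exact hne this
  · right
    intro h' h0 hlt hmem
    obtain ⟨hin, hne⟩ := hg h' h0 hlt
    have : p - (h' : Fin n) ∈ rowSupp A t ∩ supp v' := ⟨hij ▸ hin, hmem⟩
    rw [h2] at this
    exact hne this

lemma goesP_unique {T : Set (Fin n)} {p q q' : Fin n} (hq : q ∈ T) (hq' : q' ∈ T)
    (h1 : q ≠ p) (h2 : q' ≠ p) (g : GoesP T p q) (g' : GoesP T p q') : q = q' := by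
  have hd : 0 < ((q - p : Fin n) : ℕ) :=
    Nat.pos_of_ne_zero fun h0 => h1 (sub_eq_zero.1 (Fin.val_injective (by simp [h0])))
  have hd' : 0 < ((q' - p : Fin n) : ℕ) :=
    Nat.pos_of_ne_zero fun h0 => h2 (sub_eq_zero.1 (Fin.val_injective (by simp [h0])))
  have key : ∀ x : Fin n, p + ((((x - p : Fin n) : ℕ)) : Fin n) = x := by
    intro x; rw [Fin.cast_val_eq_self]; ring
  rcases lt_trichotomy ((q - p : Fin n) : ℕ) ((q' - p : Fin n) : ℕ) with h | h | h
  · exfalso; apply g' _ hd h; rw [key q]; exact hq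
  · have : q - p = q' - p := Fin.val_injective h
    exact sub_left_injective this
  · exfalso; apply g _ hd' h; rw [key q']; exact hq'

lemma goesM_unique {T : Set (Fin n)} {p q q' : Fin n} (hq : q ∈ T) (hq' : q' ∈ T)
    (h1 : q ≠ p) (h2 : q' ≠ p) (g : GoesM T p q) (g' : GoesM T p q') : q = q' := by
  have hd : 0 < ((p - q : Fin n) : ℕ) :=
    Nat.pos_of_ne_zero fun h0 => h1 (sub_eq_zero.1 (Fin.val_injective (by simp [h0]))).symm
  have hd' : 0 < ((p - q' : Fin n) : ℕ) :=
    Nat.pos_of_ne_zero fun h0 => h2 (sub_eq_zero.1 (Fin.val_injective (by simp [h0]))).symm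
  have key : ∀ x : Fin n, p - ((((p - x : Fin n) : ℕ)) : Fin n) = x := by
    intro x; rw [Fin.cast_val_eq_self]; ring
  rcases lt_trichotomy ((p - q : Fin n) : ℕ) ((p - q' : Fin n) : ℕ) with h | h | h
  · exfalso; apply g' _ hd h; rw [key q]; exact hq
  · have : p - q = p - q' := Fin.val_injective h
    exact sub_right_injective this
  · exfalso; apply g _ hd' h; rw [key q']; exact hq'

lemma adj_struct {m : ℕ} (A : Matrix (Fin m) (Fin n) ℝ) (hcirc : RowCircular A)
    {v v' : Fin n → ℝ} {p q : Fin n} (hadj : (JSG A v v').Adj p q) :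
    (p ∉ supp v' ∧ q ∈ supp v' ∧ (GoesP (supp v') p q ∨ GoesM (supp v') p q)) ∨
    (p ∈ supp v' ∧ q ∈ supp v ∧ (GoesP (supp v) p q ∨ GoesM (supp v) p q)) := by
  obtain ⟨hne, he⟩ := hadj
  rcases he with h | h
  · exact Or.inl (jsgEdge_struct A hcirc h hne)
  · right
    have hp : p ∈ supp v' := by
      obtain ⟨t, h1, h2⟩ := h
      have : p ∈ rowSupp A t ∩ supp v' := by rw [h2]; rfl
      exact this.2
    have h' : jsgEdge A v' v p q := by
      obtain ⟨t, h1, h2⟩ := h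
      exact ⟨t, h2, h1⟩
    obtain ⟨_, hq, hg⟩ := jsgEdge_struct A hcirc h' hne
    exact ⟨hp, hq, hg⟩

lemma ncard_le_two_of_goes {T : Set (Fin n)} {p : Fin n} (s : Set (Fin n))
    (hs : ∀ q ∈ s, q ∈ T ∧ q ≠ p ∧ (GoesP T p q ∨ GoesM T p q)) : s.ncard ≤ 2 := by
  classical
  have hsub : s ⊆ {q ∈ s | GoesP T p q} ∪ {q ∈ s | GoesM T p q} := by
    intro q hq
    rcases (hs q hq).2.2 with h | h
    · exact Or.inl ⟨hq, h⟩
    · exact Or.inr ⟨hq, h⟩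
  have hP : {q ∈ s | GoesP T p q}.ncard ≤ 1 := by
    rw [Set.ncard_le_one (Set.toFinite _)]
    intro a ⟨ha, hga⟩ b ⟨hb, hgb⟩
    exact goesP_unique (hs a ha).1 (hs b hb).1 (hs a ha).2.1 (hs b hb).2.1 hga hgb
  have hM : {q ∈ s | GoesM T p q}.ncard ≤ 1 := by
    rw [Set.ncard_le_one (Set.toFinite _)]
    intro a ⟨ha, hga⟩ b ⟨hb, hgb⟩
    exact goesM_unique (hs a ha).1 (hs b hb).1 (hs a ha).2.1 (hs b hb).2.1 hga hgb
  calc s.ncard ≤ ({q ∈ s | GoesP T p q} ∪ {q ∈ s | GoesM T p q}).ncard :=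
        Set.ncard_le_ncard hsub (Set.toFinite _)
    _ ≤ {q ∈ s | GoesP T p q}.ncard + {q ∈ s | GoesM T p q}.ncard := Set.ncard_union_le _ _
    _ ≤ 2 := by omega

lemma jsg_deg_le_two {m : ℕ} (A : Matrix (Fin m) (Fin n) ℝ) (hcirc : RowCircular A)
    (v v' : Fin n → ℝ) (p : Fin n) : {q | (JSG A v v').Adj p q}.ncard ≤ 2 := by
  by_cases hp : p ∈ supp v'
  · apply ncard_le_two_of_goes (T := supp v)
    intro q hq
    rcases adj_struct A hcirc hq with ⟨h, _, _⟩ | ⟨_, h2, h3⟩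
    · exact absurd hp h
    · exact ⟨h2, (hq.1).symm, h3⟩
  · apply ncard_le_two_of_goes (T := supp v')
    intro q hq
    rcases adj_struct A hcirc hq with ⟨_, h2, h3⟩ | ⟨h, _, _⟩
    · exact ⟨h2, (hq.1).symm, h3⟩
    · exact absurd h hp

end DegreeBound

section Classify

variable {n : ℕ}

lemma getElem_idx_congr {α : Type*} (l : List α) {i j : ℕ} (h : i = j)
    {hi : i < l.length} : l[i]'hi = l[j]'(h ▸ hi) := by subst h; rfl

lemma deg3_false (G : SimpleGraph (Fin n)) (hdeg : ∀ y, {q | G.Adj y q}.ncard ≤ 2)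
    {y u w z : Fin n} (h1 : G.Adj y u) (h2 : G.Adj y w) (h3 : G.Adj y z)
    (d1 : u ≠ w) (d2 : u ≠ z) (d3 : w ≠ z) : False := by
  have hsub : ({u, w, z} : Set (Fin n)) ⊆ {q | G.Adj y q} := by
    rintro x (rfl | rfl | rfl) <;> assumption
  have hcard : ({u, w, z} : Set (Fin n)).ncard = 3 := by
    rw [Set.ncard_insert_of_notMem (by simp [d1, d2]) (Set.toFinite _),
      Set.ncard_insert_of_notMem (by simp [d3]) (Set.toFinite _), Set.ncard_singleton]
  have := Set.ncard_le_ncard hsub (Set.toFinite _)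
  have := hdeg y
  omega

lemma classify_component (G : SimpleGraph (Fin n))
    (hdeg : ∀ y, {q | G.Adj y q}.ncard ≤ 2) (p : Fin n) :
    IsPathOn G {q | G.Reachable p q} ∨ IsCycleOn G {q | G.Reachable p q} := by
  classical
  set S := {q | G.Reachable p q} with hSdef
  set Good : List (Fin n) → Prop :=
    fun l => l ≠ [] ∧ l.Nodup ∧ l.Chain' G.Adj ∧ ∀ x ∈ l, x ∈ S with hGood
  have hGp : Good [p] := ⟨by simp, by simp, List.isChain_singleton p, by
    intro x hx; simp at hx; subst hx; exact SimpleGraph.Reachable.refl _⟩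
  have hbound : ∀ l, Good l → l.length ≤ n := by
    intro l hl
    simpa using hl.2.1.length_le_card
  obtain ⟨l, hl, hmax⟩ : ∃ l, Good l ∧ ∀ l', Good l' → l'.length ≤ l.length := by
    have h1 : (fun k => ∃ l, Good l ∧ l.length = k) 1 := ⟨[p], hGp, rfl⟩
    have hn : 1 ≤ n := Fin.pos p
    have hspec := Nat.findGreatest_spec (P := fun k => ∃ l, Good l ∧ l.length = k) hn h1
    obtain ⟨l, hlG, hlen⟩ := hspec
    refine ⟨l, hlG, fun l' hl' => ?_⟩
    by_contra hc
    push_neg at hc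
    exact Nat.findGreatest_is_greatest (P := fun k => ∃ l, Good l ∧ l.length = k)
      (by omega) (hbound l' hl') ⟨l', hl', rfl⟩
  obtain ⟨hnil, hnd, hch, hmem⟩ := hl
  have hL1 : 1 ≤ l.length := List.length_pos_iff.2 hnil
  have hadj_idx : ∀ k, (h : k + 1 < l.length) → G.Adj (l[k]'(by omega)) (l[k+1]'h) := by
    intro k h
    have := List.isChain_iff_getElem.1 hch k (by omega)
    simpa [List.get_eq_getElem] using this
  have hne_idx : ∀ i j : ℕ, (hi : i < l.length) → (hj : j < l.length) → i ≠ j →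
      l[i]'hi ≠ l[j]'hj := by
    intro i j hi hj hij hc
    exact hij (hnd.getElem_inj_iff.1 hc)
  -- every neighbor of a list element lies in the list
  have hclosed : ∀ x ∈ l, ∀ z, G.Adj x z → z ∈ l := by
    intro x hx z hadj
    by_contra hz
    have hzS : z ∈ S := (hmem _ hx).trans hadj.reachable
    obtain ⟨k, hk, hxk⟩ := List.mem_iff_getElem.1 hx
    subst hxk
    rcases eq_or_ne k 0 with rfl | hk0
    · have hgood : Good (z :: l) := by
        refine ⟨by simp, by simp [hnd, hz], ?_, ?_⟩
        · refine List.isChain_cons.2 ⟨?_, hch⟩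
          intro y hy
          simp only [List.head?_eq_getElem?, List.getElem?_eq_getElem hk,
            Option.mem_def, Option.some.injEq] at hy
          subst hy
          exact hadj.symm
        · intro y hy
          rcases List.mem_cons.1 hy with rfl | hy
          · exact hzS
          · exact hmem y hy
      have := hmax _ hgood
      simp at this
    rcases eq_or_ne k (l.length - 1) with hkL | hkL
    · have hgood : Good (l ++ [z]) := by
        refine ⟨by simp, ?_, ?_, ?_⟩
        · simp [List.nodup_append, hnd, hz]
          intro a ha h
          exact hz (h ▸ ha)
        · refine List.isChain_append.2 ⟨hch, by simp, ?_⟩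
          intro x' hx' y hy
          simp only [List.getLast?_eq_getElem?,
            List.getElem?_eq_getElem (show l.length - 1 < l.length by omega),
            Option.mem_def, Option.some.injEq] at hx'
          subst hx'
          simp only [List.head?_cons, Option.mem_def, Option.some.injEq] at hy
          subst hy
          rw [getElem_idx_congr l (show l.length - 1 = k from hkL.symm)]
          exact hadj
        · intro y hy
          rcases List.mem_append.1 hy with hy | hy
          · exact hmem y hy
          · simp at hy; subst hy; exact hzS
      have := hmax _ hgood
      simp at this
    · have hk1 : 0 < k := Nat.pos_of_ne_zero hk0
      have hk2 : k < l.length - 1 := by omega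
      have ha1 : G.Adj (l[k]'hk) (l[k-1]'(by omega)) := by
        have h' := hadj_idx (k-1) (by omega)
        rw [getElem_idx_congr l (show k - 1 + 1 = k by omega)] at h'
        exact h'.symm
      have ha2 : G.Adj (l[k]'hk) (l[k+1]'(by omega)) := hadj_idx k (by omega)
      exact deg3_false G hdeg ha1 ha2 hadj
        (hne_idx _ _ _ _ (by omega))
        (fun hc => hz (hc ▸ List.getElem_mem _))
        (fun hc => hz (hc ▸ List.getElem_mem _))
  -- the list covers the component
  have key : ∀ (a b : Fin n) (w : G.Walk a b), a ∈ l → b ∈ l := by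
    intro a b w
    induction w with
    | nil => exact id
    | cons h q ih => intro ha; exact ih (hclosed _ ha _ h)
  have hSl : ∀ x, x ∈ S ↔ x ∈ l := by
    intro x
    refine ⟨fun hx => ?_, fun hx => hmem x hx⟩
    obtain ⟨y, hy⟩ : ∃ y, y ∈ l := by
      cases l with
      | nil => exact absurd rfl hnil
      | cons a t => exact ⟨a, List.mem_cons_self⟩
    have hyx : G.Reachable y x := (hmem y hy).symm.trans hx
    exact hyx.elim fun w => key y x w hy
  -- consecutive-in-list implies adjacent
  have hconsec_adj : ∀ a b, ListConsec l a b → G.Adj a b := by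
    rintro a b ⟨k, hor⟩
    rcases hor with ⟨h1, h2⟩ | ⟨h1, h2⟩
    · obtain ⟨hk2, he2⟩ := List.getElem?_eq_some_iff.1 h2
      obtain ⟨hk1, he1⟩ := List.getElem?_eq_some_iff.1 h1
      rw [← he1, ← he2]
      exact hadj_idx k hk2
    · obtain ⟨hk2, he2⟩ := List.getElem?_eq_some_iff.1 h2
      obtain ⟨hk1, he1⟩ := List.getElem?_eq_some_iff.1 h1
      rw [← he1, ← he2]
      exact (hadj_idx k hk2).symm
  by_cases hU : 3 ≤ l.length ∧ G.Adj (l[0]'(by omega)) (l[l.length-1]'(by omega))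
  · -- cycle case
    obtain ⟨hL3, hadj0⟩ := hU
    right
    refine ⟨l, hL3, hnd, hSl, ?_, ?_⟩
    · -- adjacency implies cyclically consecutive
      intro a b ha hadj'
      obtain ⟨k, hk, hak⟩ := List.mem_iff_getElem.1 ((hSl a).1 ha)
      obtain ⟨k', hk', hbk⟩ := List.mem_iff_getElem.1 (hclosed _ ((hSl a).1 ha) _ hadj')
      subst hak hbk
      have hkk' : k ≠ k' := fun h => hadj'.ne (by simp [h])
      rcases eq_or_ne k 0 with rfl | hk0
      · -- endpoints: neighbors are l[1] and l[L-1]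
        have hn1 : G.Adj (l[0]'(by omega)) (l[1]'(by omega)) := hadj_idx 0 (by omega)
        have hdist : (l[1]'(by omega)) ≠ (l[l.length-1]'(by omega)) :=
          hne_idx _ _ _ _ (by omega)
        have hb : (l[k']'hk') = l[1]'(by omega) ∨ (l[k']'hk') = l[l.length-1]'(by omega) := by
          by_contra hc
          push_neg at hc
          exact deg3_false G hdeg hn1 hadj0 hadj' hdist hc.1.symm hc.2.symm
        rcases hb with hb | hb
        · exact ⟨0, by omega, Or.inl ⟨List.getElem?_eq_getElem _,
            by rw [Nat.mod_eq_of_lt (by omega), List.getElem?_eq_getElem (by omega : 1 < l.length)]; exact congrArg some hb.symm⟩⟩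
        · refine ⟨l.length - 1, by omega, Or.inr ⟨?_, ?_⟩⟩
          · rw [List.getElem?_eq_getElem (by omega : l.length - 1 < l.length)]
            exact congrArg some hb.symm
          · rw [show l.length - 1 + 1 = l.length from by omega, Nat.mod_self]
            exact List.getElem?_eq_getElem _
      rcases eq_or_ne k (l.length - 1) with hkL | hkL
      · subst hkL
        have hn1 : G.Adj (l[l.length-1]'(by omega)) (l[l.length-2]'(by omega)) := by
          have h' := hadj_idx (l.length-2) (by omega)
          rw [getElem_idx_congr l (show l.length - 2 + 1 = l.length - 1 by omega)] at h'
          exact h'.symm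
        have hdist : (l[l.length-2]'(by omega)) ≠ (l[0]'(by omega)) :=
          hne_idx _ _ _ _ (by omega)
        have hb : (l[k']'hk') = l[l.length-2]'(by omega) ∨ (l[k']'hk') = l[0]'(by omega) := by
          by_contra hc
          push_neg at hc
          exact deg3_false G hdeg hn1 hadj0.symm hadj' hdist hc.1.symm hc.2.symm
        rcases hb with hb | hb
        · refine ⟨l.length - 2, by omega, Or.inr ⟨?_, ?_⟩⟩
          · rw [List.getElem?_eq_getElem (by omega : l.length - 2 < l.length)]
            exact congrArg some hb.symm
          · rw [show l.length - 2 + 1 = l.length - 1 from by omega,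
              Nat.mod_eq_of_lt (by omega)]
            exact List.getElem?_eq_getElem _
        · refine ⟨l.length - 1, by omega, Or.inl ⟨List.getElem?_eq_getElem _, ?_⟩⟩
          rw [show l.length - 1 + 1 = l.length from by omega, Nat.mod_self]
          rw [List.getElem?_eq_getElem (by omega : 0 < l.length)]
          exact congrArg some hb.symm
      · -- interior
        have hk1 : 0 < k := Nat.pos_of_ne_zero hk0
        have hk2 : k < l.length - 1 := by omega
        have ha1 : G.Adj (l[k]'hk) (l[k-1]'(by omega)) := by
          have h' := hadj_idx (k-1) (by omega)
          rw [getElem_idx_congr l (show k - 1 + 1 = k by omega)] at h'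
          exact h'.symm
        have ha2 : G.Adj (l[k]'hk) (l[k+1]'(by omega)) := hadj_idx k (by omega)
        have hb : (l[k']'hk') = l[k-1]'(by omega) ∨ (l[k']'hk') = l[k+1]'(by omega) := by
          by_contra hc
          push_neg at hc
          exact deg3_false G hdeg ha1 ha2 hadj' (hne_idx _ _ _ _ (by omega))
            hc.1.symm hc.2.symm
        rcases hb with hb | hb
        · refine ⟨k - 1, by omega, Or.inr ⟨?_, ?_⟩⟩
          · rw [List.getElem?_eq_getElem (by omega : k - 1 < l.length)]
            exact congrArg some hb.symm
          · rw [show k - 1 + 1 = k from by omega, Nat.mod_eq_of_lt (by omega)]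
            exact List.getElem?_eq_getElem _
        · refine ⟨k, by omega, Or.inl ⟨List.getElem?_eq_getElem _, ?_⟩⟩
          rw [Nat.mod_eq_of_lt (by omega), List.getElem?_eq_getElem (by omega : k + 1 < l.length)]
          exact congrArg some hb.symm
    · -- cyclically consecutive implies adjacent
      rintro a b ⟨k, hkL, hor⟩
      rcases Nat.lt_or_ge (k+1) l.length with hlt | hge
      · rw [Nat.mod_eq_of_lt hlt] at hor
        rcases hor with ⟨h1, h2⟩ | ⟨h1, h2⟩
        · obtain ⟨hk2, he2⟩ := List.getElem?_eq_some_iff.1 h2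
          obtain ⟨hk1, he1⟩ := List.getElem?_eq_some_iff.1 h1
          rw [← he1, ← he2]; exact hadj_idx k hk2
        · obtain ⟨hk2, he2⟩ := List.getElem?_eq_some_iff.1 h2
          obtain ⟨hk1, he1⟩ := List.getElem?_eq_some_iff.1 h1
          rw [← he1, ← he2]; exact (hadj_idx k hk2).symm
      · have hkeq : k = l.length - 1 := by omega
        have hmod : (k + 1) % l.length = 0 := by
          rw [show k + 1 = l.length from by omega, Nat.mod_self]
        rw [hmod] at hor
        rcases hor with ⟨h1, h2⟩ | ⟨h1, h2⟩
        · obtain ⟨hk1, he1⟩ := List.getElem?_eq_some_iff.1 h1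
          obtain ⟨hk2, he2⟩ := List.getElem?_eq_some_iff.1 h2
          rw [← he1, ← he2]
          have : k = l.length - 1 := hkeq
          subst this
          exact hadj0.symm
        · obtain ⟨hk1, he1⟩ := List.getElem?_eq_some_iff.1 h1
          obtain ⟨hk2, he2⟩ := List.getElem?_eq_some_iff.1 h2
          rw [← he1, ← he2]
          have : k = l.length - 1 := hkeq
          subst this
          exact hadj0
  · -- path case
    left
    refine ⟨l, hnd, hSl, ?_, hconsec_adj⟩
    intro a b ha hadj'
    obtain ⟨k, hk, hak⟩ := List.mem_iff_getElem.1 ((hSl a).1 ha)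
    obtain ⟨k', hk', hbk⟩ := List.mem_iff_getElem.1 (hclosed _ ((hSl a).1 ha) _ hadj')
    subst hak hbk
    have hkk' : k ≠ k' := fun h => hadj'.ne (by simp [h])
    have hgoal : k' = k + 1 ∨ k = k' + 1 := by
      by_contra hcc
      push_neg at hcc
      obtain ⟨hc1, hc2⟩ := hcc
      rcases eq_or_ne k 0 with rfl | hk0
      · -- a is the head
        have hL2 : 2 ≤ l.length := by omega
        have hk'2 : 2 ≤ k' := by omega
        have hL3 : 3 ≤ l.length := by omega
        rcases eq_or_ne k' (l.length - 1) with hk'L | hk'L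
        · subst hk'L
          exact hU ⟨hL3, hadj'⟩
        · have hk'lt : k' < l.length - 1 := by omega
          have hb1 : G.Adj (l[k']'hk') (l[k'-1]'(by omega)) := by
            have h' := hadj_idx (k'-1) (by omega)
            rw [getElem_idx_congr l (show k' - 1 + 1 = k' by omega)] at h'
            exact h'.symm
          have hb2 : G.Adj (l[k']'hk') (l[k'+1]'(by omega)) := hadj_idx k' (by omega)
          exact deg3_false G hdeg hb1 hb2 hadj'.symm (hne_idx _ _ _ _ (by omega))
            (hne_idx _ _ _ _ (by omega)) (hne_idx _ _ _ _ (by omega))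
      rcases eq_or_ne k (l.length - 1) with hkL | hkL
      · -- a is the last element
        subst hkL
        have hk'ne : k' ≠ l.length - 2 := fun h => hc2 (by omega)
        have hL3 : 3 ≤ l.length := by omega
        rcases eq_or_ne k' 0 with rfl | hk'0
        · exact hU ⟨hL3, hadj'.symm⟩
        · have hk'lt : k' < l.length - 1 := by omega
          have hb1 : G.Adj (l[k']'hk') (l[k'-1]'(by omega)) := by
            have h' := hadj_idx (k'-1) (by omega)
            rw [getElem_idx_congr l (show k' - 1 + 1 = k' by omega)] at h'
            exact h'.symm
          have hb2 : G.Adj (l[k']'hk') (l[k'+1]'(by omega)) := hadj_idx k' (by omega)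
          exact deg3_false G hdeg hb1 hb2 hadj'.symm (hne_idx _ _ _ _ (by omega))
            (hne_idx _ _ _ _ (by omega)) (hne_idx _ _ _ _ (by omega))
      · -- a is interior
        have hk1 : 0 < k := Nat.pos_of_ne_zero hk0
        have hk2 : k < l.length - 1 := by omega
        have ha1 : G.Adj (l[k]'hk) (l[k-1]'(by omega)) := by
          have h' := hadj_idx (k-1) (by omega)
          rw [getElem_idx_congr l (show k - 1 + 1 = k by omega)] at h'
          exact h'.symm
        have ha2 : G.Adj (l[k]'hk) (l[k+1]'(by omega)) := hadj_idx k (by omega)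
        exact deg3_false G hdeg ha1 ha2 hadj' (hne_idx _ _ _ _ (by omega))
          (hne_idx _ _ _ _ (by omega)) (hne_idx _ _ _ _ (by omega))
    rcases hgoal with h | h
    · exact ⟨k, Or.inl ⟨List.getElem?_eq_getElem _, by
        rw [← h]; exact List.getElem?_eq_getElem _⟩⟩
    · exact ⟨k', Or.inr ⟨List.getElem?_eq_getElem _, by
        rw [← h]; exact List.getElem?_eq_getElem _⟩⟩

end Classify

/-- for row circular `A`, every node of the joint saturation graph has
degree at most 2, hence every connected component is a path (possibly an isolated
node) or a cycle. -/
theorem stmt6 {m n : ℕ} [NeZero n] (A : Matrix (Fin m) (Fin n) ℝ)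
    (hstd : StandardAssumptions A) (hcirc : RowCircular A)
    (v v' : Fin n → ℝ) (hne : v ≠ v')
    (hv : IsVertex (Qstar A) v) (hv' : IsVertex (Qstar A) v') :
    (∀ p : Fin n, {q | (JSG A v v').Adj p q}.ncard ≤ 2) ∧
      ∀ p ∈ jsgNodes v v',
        IsPathOn (JSG A v v') {q | (JSG A v v').Reachable p q} ∨
        IsCycleOn (JSG A v v') {q | (JSG A v v').Reachable p q} := by
  refine ⟨fun p => jsg_deg_le_two A hcirc v v' p, fun p _ => ?_⟩
  exact classify_component (JSG A v v') (fun y => jsg_deg_le_two A hcirc v v' y) p
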